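/- Let V ⊆ ℝ^N be a finite nonempty set of scenarios and let U = convexHull ℝ V be the polyhedral uncertainty set with vertex set contained in V. Let B ∈ ℝ^{q×d}, b ∈ ℝ^q, c ∈ ℝ^d, and suppose the first-stage feasible set X = {x ∈ ℝ^d : B x ≤ b componentwise} is nonempty. Then the two-stage adaptive robust problem and its deployment-scenario reformulation have equal optimal values: inf_{x ∈ X} ( c ⬝ x + sup_{ξ ∈ U} Q̂(x, ξ) ) = inf_{x ∈ X} ( c ⬝ x + sup_{ξ ∈ V} Q̂(x, ξ) ). -/

import Mathlib

open Matrix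

/-- Second-stage (recourse) value function:
`Q̂(x, ξ) = inf { c_viol ⬝ s : p, s, s ≥ 0, H x + D p − s ≤ E ξ + h }`. -/
noncomputable def Qhat {d g m N : ℕ} (H : Matrix (Fin m) (Fin d) ℝ)
    (D : Matrix (Fin m) (Fin g) ℝ) (E : Matrix (Fin m) (Fin N) ℝ)
    (h : Fin m → ℝ) (cviol : Fin m → ℝ) (x : Fin d → ℝ) (ξ : Fin N → ℝ) : ℝ :=
  sInf { v : ℝ | ∃ (p : Fin g → ℝ) (s : Fin m → ℝ),
    (∀ i, 0 ≤ s i) ∧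
    (∀ i, (H.mulVec x + D.mulVec p - s) i ≤ (E.mulVec ξ + h) i) ∧
    v = cviol ⬝ᵥ s }

section Aux
variable {d g m N : ℕ} (H : Matrix (Fin m) (Fin d) ℝ)
    (D : Matrix (Fin m) (Fin g) ℝ) (E : Matrix (Fin m) (Fin N) ℝ)
    (h : Fin m → ℝ) (cviol : Fin m → ℝ)

private def Feas (x : Fin d → ℝ) (ξ : Fin N → ℝ) : Set ℝ :=
  { v : ℝ | ∃ (p : Fin g → ℝ) (s : Fin m → ℝ),
    (∀ i, 0 ≤ s i) ∧
    (∀ i, (H.mulVec x + D.mulVec p - s) i ≤ (E.mulVec ξ + h) i) ∧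
    v = cviol ⬝ᵥ s }

private lemma Qhat_eq (x : Fin d → ℝ) (ξ : Fin N → ℝ) :
    Qhat H D E h cviol x ξ = sInf (Feas H D E h cviol x ξ) := rfl

private lemma Feas_nonempty (x : Fin d → ℝ) (ξ : Fin N → ℝ) :
    (Feas H D E h cviol x ξ).Nonempty := by
  refine ⟨cviol ⬝ᵥ (fun i => max 0 ((H.mulVec x - E.mulVec ξ - h) i)), 0,
    (fun i => max 0 ((H.mulVec x - E.mulVec ξ - h) i)), fun i => le_max_left _ _, fun i => ?_, rfl⟩
  have := le_max_right 0 ((H.mulVec x - E.mulVec ξ - h) i)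
  simp only [Pi.add_apply, Pi.sub_apply, Matrix.mulVec_zero, Pi.zero_apply] at *
  linarith

private lemma Feas_lb (hcviol : ∀ i, 0 ≤ cviol i) (x : Fin d → ℝ) (ξ : Fin N → ℝ) :
    ∀ v ∈ Feas H D E h cviol x ξ, (0:ℝ) ≤ v := by
  rintro v ⟨p, s, hs, _, rfl⟩
  exact Finset.sum_nonneg fun i _ => mul_nonneg (hcviol i) (hs i)

private lemma Qhat_nonneg (hcviol : ∀ i, 0 ≤ cviol i) (x : Fin d → ℝ) (ξ : Fin N → ℝ) :
    0 ≤ Qhat H D E h cviol x ξ :=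
  le_csInf (Feas_nonempty H D E h cviol x ξ) (Feas_lb H D E h cviol hcviol x ξ)

private lemma Qhat_convex_ineq (hcviol : ∀ i, 0 ≤ cviol i) (x : Fin d → ℝ)
    (ξ₁ ξ₂ : Fin N → ℝ) {a b : ℝ} (ha : 0 ≤ a) (hb : 0 ≤ b) (hab : a + b = 1) :
    Qhat H D E h cviol x (a • ξ₁ + b • ξ₂) ≤
      a * Qhat H D E h cviol x ξ₁ + b * Qhat H D E h cviol x ξ₂ := by
  rw [Qhat_eq]
  refine le_of_forall_pos_le_add fun ε hε => ?_
  obtain ⟨v₁, ⟨p₁, s₁, hs₁, hc₁, rfl⟩, hv₁⟩ :=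
    Real.lt_sInf_add_pos (Feas_nonempty H D E h cviol x ξ₁) (half_pos hε)
  obtain ⟨v₂, ⟨p₂, s₂, hs₂, hc₂, rfl⟩, hv₂⟩ :=
    Real.lt_sInf_add_pos (Feas_nonempty H D E h cviol x ξ₂) (half_pos hε)
  have hmem : cviol ⬝ᵥ (a • s₁ + b • s₂) ∈ Feas H D E h cviol x (a • ξ₁ + b • ξ₂) := by
    refine ⟨a • p₁ + b • p₂, a • s₁ + b • s₂,
      fun i => add_nonneg (mul_nonneg ha (hs₁ i)) (mul_nonneg hb (hs₂ i)), fun i => ?_, rfl⟩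
    have h1 := hc₁ i; have h2 := hc₂ i
    simp only [Pi.add_apply, Pi.sub_apply, Matrix.mulVec_add, Matrix.mulVec_smul,
      Pi.smul_apply, smul_eq_mul] at *
    have eH : a * (H *ᵥ x) i + b * (H *ᵥ x) i = (H *ᵥ x) i := by
      rw [← add_mul, hab, one_mul]
    have eh : a * h i + b * h i = h i := by rw [← add_mul, hab, one_mul]
    nlinarith [mul_le_mul_of_nonneg_left h1 ha, mul_le_mul_of_nonneg_left h2 hb, eH, eh]
  have hle := csInf_le ⟨0, Feas_lb H D E h cviol hcviol x _⟩ hmem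
  have hdot : cviol ⬝ᵥ (a • s₁ + b • s₂) = a * (cviol ⬝ᵥ s₁) + b * (cviol ⬝ᵥ s₂) := by
    simp [dotProduct_add, dotProduct_smul, smul_eq_mul]
  rw [hdot] at hle
  have e1 : a * (cviol ⬝ᵥ s₁) ≤ a * (sInf (Feas H D E h cviol x ξ₁) + ε / 2) :=
    mul_le_mul_of_nonneg_left hv₁.le ha
  have e2 : b * (cviol ⬝ᵥ s₂) ≤ b * (sInf (Feas H D E h cviol x ξ₂) + ε / 2) :=
    mul_le_mul_of_nonneg_left hv₂.le hb
  rw [Qhat_eq, Qhat_eq]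
  nlinarith

end Aux

/-- The two-stage adaptive robust problem over the polyhedral uncertainty set
`U = convexHull ℝ V` has the same optimal value as its deployment-scenario
reformulation over the vertex set `V`. -/
theorem aro_deployment_scenario_equivalence
    {d g m N q : ℕ}
    (H : Matrix (Fin m) (Fin d) ℝ) (D : Matrix (Fin m) (Fin g) ℝ)
    (E : Matrix (Fin m) (Fin N) ℝ) (h : Fin m → ℝ) (cviol : Fin m → ℝ)
    (hcviol : ∀ i, 0 ≤ cviol i)
    (B : Matrix (Fin q) (Fin d) ℝ) (b : Fin q → ℝ) (c : Fin d → ℝ)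
    (V : Set (Fin N → ℝ)) (hVfin : V.Finite) (hVne : V.Nonempty)
    (X : Set (Fin d → ℝ)) (hX : X = { x | ∀ i, B.mulVec x i ≤ b i })
    (hXne : X.Nonempty) :
    sInf ((fun x => c ⬝ᵥ x +
        sSup ((fun ξ => Qhat H D E h cviol x ξ) '' (convexHull ℝ V))) '' X) =
    sInf ((fun x => c ⬝ᵥ x +
        sSup ((fun ξ => Qhat H D E h cviol x ξ) '' V)) '' X) := by
  have key : ∀ x : Fin d → ℝ,
      sSup ((fun ξ => Qhat H D E h cviol x ξ) '' (convexHull ℝ V)) =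
      sSup ((fun ξ => Qhat H D E h cviol x ξ) '' V) := by
    intro x
    set M := sSup ((fun ξ => Qhat H D E h cviol x ξ) '' V) with hM
    have himgfin : ((fun ξ => Qhat H D E h cviol x ξ) '' V).Finite := hVfin.image _
    have himgne : ((fun ξ => Qhat H D E h cviol x ξ) '' V).Nonempty := hVne.image _
    have hbddV : BddAbove ((fun ξ => Qhat H D E h cviol x ξ) '' V) := himgfin.bddAbove
    have hVleM : ∀ ξ ∈ V, Qhat H D E h cviol x ξ ≤ M := fun ξ hξ =>
      le_csSup hbddV ⟨ξ, hξ, rfl⟩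
    -- the sublevel set is convex and contains V, hence contains the hull
    have hhull : ∀ ξ ∈ convexHull ℝ V, Qhat H D E h cviol x ξ ≤ M := by
      have : convexHull ℝ V ⊆ { ξ | Qhat H D E h cviol x ξ ≤ M } := by
        apply convexHull_min hVleM
        intro ξ₁ hξ₁ ξ₂ hξ₂ a b ha hb hab
        have t1 := Qhat_convex_ineq H D E h cviol hcviol x ξ₁ ξ₂ ha hb hab
        have t2 := mul_le_mul_of_nonneg_left (Set.mem_setOf_eq ▸ hξ₁) ha
        have t3 := mul_le_mul_of_nonneg_left (Set.mem_setOf_eq ▸ hξ₂) hb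
        have eM : a * M + b * M = M := by rw [← add_mul, hab, one_mul]
        show Qhat H D E h cviol x (a • ξ₁ + b • ξ₂) ≤ M
        linarith
      exact fun ξ hξ => this hξ
    have hhullne : ((fun ξ => Qhat H D E h cviol x ξ) '' (convexHull ℝ V)).Nonempty :=
      (hVne.mono (subset_convexHull ℝ V)).image _
    apply le_antisymm
    · apply csSup_le hhullne
      rintro v ⟨ξ, hξ, rfl⟩
      exact hhull ξ hξ
    · exact csSup_le_csSup ⟨M, by rintro v ⟨ξ, hξ, rfl⟩; exact hhull ξ hξ⟩ himgne
        (Set.image_mono (subset_convexHull ℝ V))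
  congr 1
  exact Set.image_congr fun x _ => by rw [key]
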